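/- Let W be symmetric doubly stochastic with eigenvalues in (−1,1] and connected (λ₂(W) < 1). Define the Euclidean consensus iteration x_{k+1} = P_{C^N}((W ⊗ I) x_k) where C ⊆ ℝ^{d×r} is a nonempty closed convex set and P_{C^N} applies the projection onto C blockwise. Then with x̂_k the blockwise Euclidean mean of x_k and x̂ᵥ_k its N-fold stacking, ‖x_{k+1} − x̂ᵥ_{k+1}‖_F ≤ σ₂ ‖x_k − x̂ᵥ_k‖_F, where σ₂ is the second largest singular value of W. -/

import Mathlib

open Matrix BigOperators Finset

noncomputable def fnorm {d r : ℕ} (A : Matrix (Fin d) (Fin r) ℝ) : ℝ :=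
  Real.sqrt (∑ i, ∑ j, (A i j) ^ 2)

def ip {d r : ℕ} (A B : Matrix (Fin d) (Fin r) ℝ) : ℝ :=
  ∑ i, ∑ j, A i j * B i j

def Stiefel (d r : ℕ) : Set (Matrix (Fin d) (Fin r) ℝ) :=
  {x | xᵀ * x = 1}

section Aux

variable {d r : ℕ}

lemma fnorm_nonneg (A : Matrix (Fin d) (Fin r) ℝ) : 0 ≤ fnorm A :=
  Real.sqrt_nonneg _

lemma fnorm_sq (A : Matrix (Fin d) (Fin r) ℝ) :
    fnorm A ^ 2 = ∑ i, ∑ j, (A i j) ^ 2 := by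
  apply Real.sq_sqrt
  positivity

lemma ip_self (A : Matrix (Fin d) (Fin r) ℝ) : ip A A = fnorm A ^ 2 := by
  rw [fnorm_sq, ip]
  congr 1; ext i; congr 1; ext j; ring

lemma ip_cs (A B : Matrix (Fin d) (Fin r) ℝ) : ip A B ≤ fnorm A * fnorm B := by
  have h := Real.sum_mul_le_sqrt_mul_sqrt (univ : Finset (Fin d × Fin r))
    (fun p => A p.1 p.2) (fun p => B p.1 p.2)
  simpa [ip, fnorm, Fintype.sum_prod_type] using h

lemma fnorm_expand (X Y : Matrix (Fin d) (Fin r) ℝ) (t : ℝ) :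
    fnorm (X - t • Y) ^ 2 = fnorm X ^ 2 - 2 * t * ip X Y + t ^ 2 * fnorm Y ^ 2 := by
  simp only [fnorm_sq, ip, Matrix.sub_apply, Matrix.smul_apply, smul_eq_mul,
    Finset.mul_sum, ← Finset.sum_sub_distrib, ← Finset.sum_add_distrib]
  refine Finset.sum_congr rfl fun i _ => Finset.sum_congr rfl fun j _ => ?_
  ring

/-- Variational characterization of the projection. -/
lemma proj_char (C : Set (Matrix (Fin d) (Fin r) ℝ)) (hCconv : Convex ℝ C)
    (P : Matrix (Fin d) (Fin r) ℝ → Matrix (Fin d) (Fin r) ℝ)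
    (hPmem : ∀ z, P z ∈ C)
    (hPproj : ∀ z, ∀ w ∈ C, fnorm (z - P z) ≤ fnorm (z - w))
    (z : Matrix (Fin d) (Fin r) ℝ) {w : Matrix (Fin d) (Fin r) ℝ} (hw : w ∈ C) :
    ip (z - P z) (w - P z) ≤ 0 := by
  set X := z - P z with hX
  set Y := w - P z with hY
  have hb0 : 0 ≤ fnorm Y ^ 2 := sq_nonneg _
  have key : ∀ t : ℝ, 0 < t → t ≤ 1 → 2 * t * ip X Y ≤ t ^ 2 * fnorm Y ^ 2 := by
    intro t ht0 ht1
    have hmem : P z + t • Y ∈ C := by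
      have := hCconv (hPmem z) hw (a := 1 - t) (b := t) (by linarith) (le_of_lt ht0)
        (by ring)
      convert this using 1
      rw [hY]
      module
    have hle := hPproj z _ hmem
    have hz : z - (P z + t • Y) = X - t • Y := by rw [hX]; abel
    rw [hz] at hle
    have hsq : fnorm X ^ 2 ≤ fnorm (X - t • Y) ^ 2 := by
      have := fnorm_nonneg X
      nlinarith [fnorm_nonneg (X - t • Y)]
    rw [fnorm_expand] at hsq
    linarith
  by_contra hcon
  push_neg at hcon
  rcases eq_or_lt_of_le hb0 with hb1 | hb1
  · have := key 1 one_pos le_rfl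
    rw [← hb1] at this
    nlinarith
  · set t := min 1 (ip X Y / fnorm Y ^ 2) with htdef
    have ht0 : 0 < t := lt_min one_pos (div_pos hcon hb1)
    have ht1 : t ≤ 1 := min_le_left _ _
    have htb : t ≤ ip X Y / fnorm Y ^ 2 := min_le_right _ _
    have htba : t * fnorm Y ^ 2 ≤ ip X Y := (le_div_iff₀ hb1).mp htb
    have h2 := key t ht0 ht1
    nlinarith [mul_le_mul_of_nonneg_left htba (le_of_lt ht0), mul_pos ht0 hcon]

/-- Nonexpansiveness of the projection. -/
lemma proj_nonexp (C : Set (Matrix (Fin d) (Fin r) ℝ)) (hCconv : Convex ℝ C)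
    (P : Matrix (Fin d) (Fin r) ℝ → Matrix (Fin d) (Fin r) ℝ)
    (hPmem : ∀ z, P z ∈ C)
    (hPproj : ∀ z, ∀ w ∈ C, fnorm (z - P z) ≤ fnorm (z - w))
    (z w : Matrix (Fin d) (Fin r) ℝ) :
    fnorm (P z - P w) ≤ fnorm (z - w) := by
  set p := P z
  set q := P w
  have h1 : ip (z - p) (q - p) ≤ 0 := proj_char C hCconv P hPmem hPproj z (hPmem w)
  have h2 : ip (w - q) (p - q) ≤ 0 := proj_char C hCconv P hPmem hPproj w (hPmem z)
  have hid : ip (z - w) (p - q) =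
      ip (p - q) (p - q) - ip (z - p) (q - p) - ip (w - q) (p - q) := by
    simp only [ip, ← Finset.sum_sub_distrib]
    refine Finset.sum_congr rfl fun i _ => Finset.sum_congr rfl fun j _ => ?_
    simp only [Matrix.sub_apply]
    ring
  have hkey : fnorm (p - q) ^ 2 ≤ ip (z - w) (p - q) := by
    rw [hid, ip_self]
    linarith
  have hcs : ip (z - w) (p - q) ≤ fnorm (z - w) * fnorm (p - q) := ip_cs _ _
  have hpq := fnorm_nonneg (p - q)
  have hzw := fnorm_nonneg (z - w)
  nlinarith

/-- The mean minimizes the sum of squared deviations. -/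
lemma mean_min {n : ℕ} (hn : 0 < n) (u : Fin n → ℝ) (c : ℝ) :
    ∑ i, (u i - (n : ℝ)⁻¹ * ∑ j, u j) ^ 2 ≤ ∑ i, (u i - c) ^ 2 := by
  have hexp : ∀ t : ℝ, ∑ i, (u i - t) ^ 2
      = ∑ i, (u i) ^ 2 - 2 * t * (∑ i, u i) + (n : ℝ) * t ^ 2 := by
    intro t
    rw [Finset.mul_sum, ← Finset.sum_sub_distrib]
    rw [show (n : ℝ) * t ^ 2 = ∑ _i : Fin n, t ^ 2 by
      simp [Finset.sum_const, Finset.card_univ, mul_comm]]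
    rw [← Finset.sum_add_distrib]
    refine Finset.sum_congr rfl fun i _ => ?_
    ring
  rw [hexp, hexp]
  have hn' : (0 : ℝ) < n := by exact_mod_cast hn
  have hne : (n : ℝ) ≠ 0 := ne_of_gt hn'
  set S := ∑ i, u i with hS
  have h1 : (n : ℝ) * ((n : ℝ)⁻¹ * S) ^ 2 = (n : ℝ)⁻¹ * S ^ 2 := by
    field_simp
  have h2 : 2 * ((n : ℝ)⁻¹ * S) * S = 2 * ((n : ℝ)⁻¹ * S ^ 2) := by ring
  rw [h1, h2]
  have h5 : (0 : ℝ) ≤ ((n : ℝ) * c - S) ^ 2 / n := by positivity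
  have h6 : ((n : ℝ) * c - S) ^ 2 / n = (n : ℝ) * c ^ 2 - 2 * c * S + (n : ℝ)⁻¹ * S ^ 2 := by
    field_simp
    ring
  linarith

lemma swap_sums {n : ℕ} (f : Fin n → Fin d → Fin r → ℝ) :
    ∑ i, ∑ a, ∑ b, f i a b = ∑ a, ∑ b, ∑ i, f i a b := by
  rw [Finset.sum_comm]
  exact Finset.sum_congr rfl fun a _ => Finset.sum_comm

end Aux

theorem stmt12 {N d r : ℕ} (hN : 0 < N) (W : Matrix (Fin N) (Fin N) ℝ)
    (hsymm : W.IsSymm) (hnn : ∀ i j, 0 ≤ W i j) (hrow : ∀ i, ∑ j, W i j = 1)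
    (heig : ∀ t : ℝ, (∃ v : Fin N → ℝ, v ≠ 0 ∧ W.mulVec v = t • v) → -1 < t ∧ t ≤ 1)
    (σ₂ : ℝ) (hσ₂0 : 0 ≤ σ₂)
    (hσ₂ : ∀ v : Fin N → ℝ, (∑ i, v i) = 0 →
      ∑ i, (W.mulVec v i) ^ 2 ≤ σ₂ ^ 2 * ∑ i, (v i) ^ 2)
    (C : Set (Matrix (Fin d) (Fin r) ℝ)) (hCne : C.Nonempty)
    (hCconv : Convex ℝ C) (hCclosed : IsClosed C)
    (P : Matrix (Fin d) (Fin r) ℝ → Matrix (Fin d) (Fin r) ℝ)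
    (hPmem : ∀ z, P z ∈ C)
    (hPproj : ∀ z, ∀ w ∈ C, fnorm (z - P z) ≤ fnorm (z - w))
    (x xnext : Fin N → Matrix (Fin d) (Fin r) ℝ)
    (hiter : ∀ i, xnext i = P (∑ j, W i j • x j)) :
    Real.sqrt (∑ i, fnorm (xnext i - ((N : ℝ))⁻¹ • ∑ j, xnext j) ^ 2)
      ≤ σ₂ * Real.sqrt (∑ i, fnorm (x i - ((N : ℝ))⁻¹ • ∑ j, x j) ^ 2) := by
  have hN' : (0 : ℝ) < N := by exact_mod_cast hN
  set xh : Matrix (Fin d) (Fin r) ℝ := ((N : ℝ))⁻¹ • ∑ j, x j with hxh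
  -- Step A: the mean minimizes
  have stepA : ∑ i, fnorm (xnext i - ((N : ℝ))⁻¹ • ∑ j, xnext j) ^ 2
      ≤ ∑ i, fnorm (xnext i - P xh) ^ 2 := by
    simp only [fnorm_sq]
    rw [swap_sums (fun i a b => ((xnext i - ((N : ℝ))⁻¹ • ∑ j, xnext j) a b) ^ 2),
      swap_sums (fun i a b => ((xnext i - P xh) a b) ^ 2)]
    refine Finset.sum_le_sum fun a _ => Finset.sum_le_sum fun b _ => ?_
    have := mean_min hN (fun i => xnext i a b) ((P xh) a b)
    simpa [Matrix.sub_apply, Matrix.smul_apply, Matrix.sum_apply, smul_eq_mul] using this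
  -- Step B: nonexpansiveness pointwise
  have stepB' : ∑ i, fnorm (xnext i - P xh) ^ 2
      ≤ ∑ i, fnorm ((∑ j, W i j • x j) - xh) ^ 2 := by
    refine Finset.sum_le_sum fun i _ => ?_
    have h2 : fnorm (xnext i - P xh) ≤ fnorm ((∑ j, W i j • x j) - xh) := by
      rw [hiter i]
      exact proj_nonexp C hCconv P hPmem hPproj _ _
    have h1 := fnorm_nonneg (xnext i - P xh)
    nlinarith
  -- Step C: spectral bound
  have stepC : ∑ i, fnorm ((∑ j, W i j • x j) - xh) ^ 2
      ≤ σ₂ ^ 2 * ∑ i, fnorm (x i - xh) ^ 2 := by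
    simp only [fnorm_sq]
    rw [swap_sums (fun i a b => (((∑ j, W i j • x j) - xh) a b) ^ 2),
      swap_sums (fun i a b => ((x i - xh) a b) ^ 2), Finset.mul_sum]
    refine Finset.sum_le_sum fun a _ => ?_
    rw [Finset.mul_sum]
    refine Finset.sum_le_sum fun b _ => ?_
    set v : Fin N → ℝ := fun j => x j a b - xh a b with hv
    have hvsum : ∑ j, v j = 0 := by
      simp only [hv, Finset.sum_sub_distrib, Finset.sum_const, Finset.card_univ,
        Fintype.card_fin, nsmul_eq_mul]
      have : xh a b = (N : ℝ)⁻¹ * ∑ j, x j a b := by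
        simp [hxh, Matrix.smul_apply, Matrix.sum_apply, smul_eq_mul]
      rw [this]
      field_simp
      ring
    have hmv : ∀ i, ((∑ j, W i j • x j) - xh) a b = W.mulVec v i := by
      intro i
      simp only [Matrix.mulVec, dotProduct, hv, mul_sub, Finset.sum_sub_distrib,
        ← Finset.sum_mul, hrow i, one_mul, Matrix.sub_apply, Matrix.sum_apply,
        Matrix.smul_apply, smul_eq_mul]
    calc ∑ i, (((∑ j, W i j • x j) - xh) a b) ^ 2
        = ∑ i, (W.mulVec v i) ^ 2 := by
          refine Finset.sum_congr rfl fun i _ => ?_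
          rw [hmv i]
      _ ≤ σ₂ ^ 2 * ∑ i, (v i) ^ 2 := hσ₂ v hvsum
      _ = σ₂ ^ 2 * ∑ i, ((x i - xh) a b) ^ 2 := rfl
  have main : ∑ i, fnorm (xnext i - ((N : ℝ))⁻¹ • ∑ j, xnext j) ^ 2
      ≤ σ₂ ^ 2 * ∑ i, fnorm (x i - xh) ^ 2 := le_trans stepA (le_trans stepB' stepC)
  calc Real.sqrt (∑ i, fnorm (xnext i - ((N : ℝ))⁻¹ • ∑ j, xnext j) ^ 2)
      ≤ Real.sqrt (σ₂ ^ 2 * ∑ i, fnorm (x i - xh) ^ 2) := Real.sqrt_le_sqrt main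
    _ = σ₂ * Real.sqrt (∑ i, fnorm (x i - xh) ^ 2) := by
        rw [Real.sqrt_mul (sq_nonneg σ₂), Real.sqrt_sq hσ₂0]
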